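/- Let G be a k-regular graph on N vertices with adjacency matrix A and least eigenvalue λ_min. If S is an independent set with |S| = N·(-λ_min)/(k - λ_min), then the characteristic vector of S lies in the sum of the eigenspace of A for eigenvalue k and the eigenspace for eigenvalue λ_min. -/

import Mathlib

open Matrix

lemma key_sym {n : Type*} [Fintype n] [DecidableEq n] {A : Matrix n n ℝ} (hA : A.IsHermitian)
    (lmin : ℝ) (hle : ∀ i, lmin ≤ hA.eigenvalues i) (x : n → ℝ)
    (hx : x ⬝ᵥ (A *ᵥ x) = lmin * (x ⬝ᵥ x)) :
    A *ᵥ x = lmin • x := by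
  set b := hA.eigenvectorBasis with hb
  set μ := hA.eigenvalues with hμ
  have hAT : Aᵀ = A := by
    rw [← Matrix.conjTranspose_eq_transpose_of_trivial]; exact hA
  have hdot : ∀ u v : n → ℝ,
      u ⬝ᵥ v = @inner ℝ (EuclideanSpace ℝ n) _ (WithLp.toLp 2 u) (WithLp.toLp 2 v) := by
    intro u v
    rw [EuclideanSpace.inner_eq_star_dotProduct, star_trivial, dotProduct_comm]
  have hAx : ∀ i, b.repr (WithLp.toLp 2 (A *ᵥ x)) i
      = μ i * b.repr (WithLp.toLp 2 x) i := by
    intro i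
    rw [b.repr_apply_apply, b.repr_apply_apply, EuclideanSpace.inner_eq_star_dotProduct,
      EuclideanSpace.inner_eq_star_dotProduct, star_trivial, dotProduct_comm, dotProduct_mulVec,
      ← hAT, vecMul_transpose]
    have hm := hA.mulVec_eigenvectorBasis i
    rw [hm, smul_dotProduct, smul_eq_mul, dotProduct_comm]
  set c : n → ℝ := fun i => b.repr (WithLp.toLp 2 x) i with hc
  have h1 : x ⬝ᵥ (A *ᵥ x) = ∑ i, c i * (μ i * c i) := by
    rw [hdot, ← b.repr.inner_map_map (WithLp.toLp 2 x) (WithLp.toLp 2 (A *ᵥ x))]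
    rw [PiLp.inner_apply]
    refine Finset.sum_congr rfl fun i _ => ?_
    rw [RCLike.inner_apply, hAx i]
    simp [starRingEnd_apply]
    simp only [hc]; ring
  have h2 : x ⬝ᵥ x = ∑ i, c i * c i := by
    rw [hdot, ← b.repr.inner_map_map (WithLp.toLp 2 x) (WithLp.toLp 2 x)]
    rw [PiLp.inner_apply]
    refine Finset.sum_congr rfl fun i _ => ?_
    simp [RCLike.inner_apply, starRingEnd_apply]
    simp only [hc]; ring
  have hsum : ∑ i, (μ i - lmin) * (c i * c i) = 0 := by
    have : ∑ i, (μ i - lmin) * (c i * c i)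
        = (∑ i, c i * (μ i * c i)) - lmin * ∑ i, c i * c i := by
      rw [Finset.mul_sum, ← Finset.sum_sub_distrib]
      exact Finset.sum_congr rfl fun i _ => by ring
    rw [this, ← h1, ← h2, hx, sub_self]
  have hzero := (Finset.sum_eq_zero_iff_of_nonneg
    (fun i _ => mul_nonneg (by linarith [hle i]) (mul_self_nonneg (c i)))).1 hsum
  have hfin : ∀ i, μ i * c i = lmin * c i := by
    intro i
    rcases mul_eq_zero.1 (hzero i (Finset.mem_univ i)) with h | h
    · have : μ i = lmin := by linarith [sub_eq_zero.1 h]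
      rw [this]
    · rw [mul_self_eq_zero.1 h, mul_zero, mul_zero]
  have final : b.repr (WithLp.toLp 2 (A *ᵥ x))
      = b.repr (lmin • (WithLp.toLp 2 x)) := by
    ext i
    rw [hAx i, hfin i, _root_.map_smul]
    rfl
  exact WithLp.toLp_injective 2 (b.repr.injective final)

theorem ratio_bound_equality (V : Type*) [Fintype V] [DecidableEq V]
    (G : SimpleGraph V) [DecidableRel G.Adj] (k : ℕ)
    (hconn : G.Connected)
    (hreg : G.IsRegularOfDegree k)
    (lmin : ℝ)
    (hmin : Module.End.HasEigenvalue (Matrix.toLin' (G.adjMatrix ℝ)) lmin)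
    (hleast : ∀ μ : ℝ, Module.End.HasEigenvalue (Matrix.toLin' (G.adjMatrix ℝ)) μ → lmin ≤ μ)
    (S : Finset V) (hS : ∀ v ∈ S, ∀ w ∈ S, ¬ G.Adj v w)
    (heq : (S.card : ℝ) = (Fintype.card V : ℝ) * (-lmin) / ((k : ℝ) - lmin)) :
    (fun v => if v ∈ S then (1 : ℝ) else 0) ∈
      Module.End.eigenspace (Matrix.toLin' (G.adjMatrix ℝ)) (k : ℝ) ⊔
        Module.End.eigenspace (Matrix.toLin' (G.adjMatrix ℝ)) lmin := by
  classical
  set A := G.adjMatrix ℝ with hAdef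
  have hA : A.IsHermitian := by
    rw [Matrix.IsHermitian, Matrix.conjTranspose_eq_transpose_of_trivial]
    exact G.isSymm_adjMatrix
  have hAT : Aᵀ = A := G.isSymm_adjMatrix
  set f : V → ℝ := fun v => if v ∈ S then (1 : ℝ) else 0 with hf
  have : Nonempty V := hconn.nonempty
  set N : ℝ := (Fintype.card V : ℝ) with hNdef
  have hN : 0 < N := by
    rw [hNdef]
    exact_mod_cast Fintype.card_pos
  set o : V → ℝ := fun _ => (1 : ℝ) with ho
  have hone : A *ᵥ o = (k : ℝ) • o := by
    funext v
    show (G.adjMatrix ℝ *ᵥ Function.const V (1 : ℝ)) v = (k : ℝ) • (1 : ℝ)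
    rw [SimpleGraph.adjMatrix_mulVec_const_apply_of_regular hreg]
    simp
  have honemem : o ∈ Module.End.eigenspace (Matrix.toLin' A) (k : ℝ) := by
    rw [Module.End.mem_eigenspace_iff, Matrix.toLin'_apply, hone]
  have hone_ne : o ≠ 0 := by
    intro h
    have := congrFun h (Classical.arbitrary V)
    simp [o] at this
  have hlk : lmin ≤ (k : ℝ) :=
    hleast _ (Module.End.hasEigenvalue_of_hasEigenvector ⟨honemem, hone_ne⟩)
  by_cases hkl : (k : ℝ) = lmin
  · have hS0 : (S.card : ℝ) = 0 := by rw [heq, hkl, sub_self, div_zero]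
    have hSe : S = ∅ := by
      have : S.card = 0 := by exact_mod_cast hS0
      exact Finset.card_eq_zero.1 this
    have hfz : f = 0 := by funext v; simp [hf, hSe]
    rw [hfz]
    exact zero_mem _
  have hkml : (k : ℝ) - lmin ≠ 0 := sub_ne_zero.2 hkl
  set s : ℝ := (S.card : ℝ) with hsdef
  set c : ℝ := s / N with hcdef
  -- dot product computations
  have hfdot : ∀ g : V → ℝ, f ⬝ᵥ g = ∑ v ∈ S, g v := by
    intro g
    simp only [dotProduct, hf, ite_mul, one_mul, zero_mul]
    rw [Finset.sum_ite_mem, Finset.univ_inter]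
  have hdotf : ∀ g : V → ℝ, g ⬝ᵥ f = ∑ v ∈ S, g v := by
    intro g
    simp only [dotProduct, hf, mul_ite, mul_one, mul_zero]
    rw [Finset.sum_ite_mem, Finset.univ_inter]
  have hff : f ⬝ᵥ f = s := by
    rw [hfdot f]
    rw [show ∑ v ∈ S, f v = ∑ v ∈ S, 1 from Finset.sum_congr rfl fun v hv => by simp [hf, hv]]
    simp [hsdef]
  have hof : o ⬝ᵥ f = s := by
    rw [hdotf o]; simp [o, hsdef]
  have hfo : f ⬝ᵥ o = s := by
    rw [hfdot o]; simp [o, hsdef]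
  have hoo : o ⬝ᵥ o = N := by
    simp [o, dotProduct, hNdef]
  have hfAf : f ⬝ᵥ (A *ᵥ f) = 0 := by
    rw [hfdot]
    refine Finset.sum_eq_zero fun v hv => ?_
    have : (A *ᵥ f) v = ∑ w ∈ S, A v w := by
      simp only [Matrix.mulVec, dotProduct, hf, mul_ite, mul_one, mul_zero]
      rw [Finset.sum_ite_mem, Finset.univ_inter]
    rw [this]
    refine Finset.sum_eq_zero fun w hw => ?_
    simp [hAdef, SimpleGraph.adjMatrix_apply, hS v hv w hw]
  have hfAo : f ⬝ᵥ (A *ᵥ o) = k * s := by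
    rw [hone, dotProduct_smul, hfo, smul_eq_mul]
  have hoAf : o ⬝ᵥ (A *ᵥ f) = k * s := by
    rw [dotProduct_mulVec, ← hAT, vecMul_transpose, hone, smul_dotProduct, hof, smul_eq_mul]
  have hoAo : o ⬝ᵥ (A *ᵥ o) = k * N := by
    rw [hone, dotProduct_smul, hoo, smul_eq_mul]
  -- the shifted vector
  set x : V → ℝ := f - c • o with hx
  have hxq : x ⬝ᵥ (A *ᵥ x) = lmin * (x ⬝ᵥ x) := by
    have e1 : A *ᵥ x = A *ᵥ f - c • (A *ᵥ o) := by
      rw [hx, Matrix.mulVec_sub, Matrix.mulVec_smul]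
    have eq1 : x ⬝ᵥ (A *ᵥ x) = -(2 * c * (k * s)) + c * c * (k * N) := by
      rw [e1, hx]
      rw [sub_dotProduct, dotProduct_sub, dotProduct_sub,
        smul_dotProduct, smul_dotProduct, dotProduct_smul,
        dotProduct_smul, hfAf, hfAo, hoAf, hoAo]
      simp only [smul_eq_mul]
      ring
    have eq2 : x ⬝ᵥ x = s - 2 * c * s + c * c * N := by
      rw [hx, sub_dotProduct, dotProduct_sub, dotProduct_sub,
        smul_dotProduct, smul_dotProduct, dotProduct_smul,
        dotProduct_smul, hff, hfo, hof, hoo]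
      simp only [smul_eq_mul]
      ring
    rw [eq1, eq2, hcdef]
    have hs : s = N * (-lmin) / ((k : ℝ) - lmin) := heq
    rw [hs]
    field_simp
    ring
  have hle : ∀ i, lmin ≤ hA.eigenvalues i := by
    intro i
    have hv : Module.End.HasEigenvector (Matrix.toLin' A) (hA.eigenvalues i)
        (hA.eigenvectorBasis i) := by
      constructor
      · rw [Module.End.mem_eigenspace_iff, Matrix.toLin'_apply]
        exact hA.mulVec_eigenvectorBasis i
      · exact fun h => hA.eigenvectorBasis.orthonormal.ne_zero i (WithLp.ofLp_injective 2 (show (hA.eigenvectorBasis i).ofLp = (0 : EuclideanSpace ℝ V).ofLp from h))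
    exact hleast _ (Module.End.hasEigenvalue_of_hasEigenvector hv)
  have hxA : A *ᵥ x = lmin • x := key_sym hA lmin hle x hxq
  have hxmem : x ∈ Module.End.eigenspace (Matrix.toLin' A) lmin := by
    rw [Module.End.mem_eigenspace_iff, Matrix.toLin'_apply, hxA]
  have hsplit : f = c • o + x := by
    rw [hx]; abel
  rw [hsplit]
  exact Submodule.add_mem_sup (Submodule.smul_mem _ c honemem) hxmem
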